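/- If n ≡ 1 (mod 6) or n ≡ 5 (mod 6), then the cycle C_n admits no J-colouring: for every proper colouring of C_n, some vertex's closed neighbourhood fails to contain all colours used. -/

import Mathlib

open SimpleGraph
open Fin.NatCast Fin.CommRing

/-- A colouring is proper. -/
def ProperColoring {V : Type*} {k : ℕ} (G : SimpleGraph V) (c : V → Fin k) : Prop :=
  ∀ u v, G.Adj u v → c u ≠ c v

/-- Vertex `v` belongs to a rainbow neighbourhood: its closed neighbourhood
contains every colour. -/
def RainbowAt {V : Type*} {k : ℕ} (G : SimpleGraph V) (c : V → Fin k) (v : V) : Prop :=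
  ∀ i : Fin k, ∃ u, (u = v ∨ G.Adj v u) ∧ c u = i

/-- A J-colouring: a proper colouring in which every vertex belongs to a
rainbow neighbourhood. -/
def IsJColoring {V : Type*} {k : ℕ} (G : SimpleGraph V) (c : V → Fin k) : Prop :=
  ProperColoring G c ∧ ∀ v, RainbowAt G c v

theorem cycle_not_JColorable (n : ℕ) (hn : 3 ≤ n) (h : n % 6 = 1 ∨ n % 6 = 5) :
    ∀ (k : ℕ) (c : Fin n → Fin k), ProperColoring (cycleGraph n) c →
      ∃ v : Fin n, ∃ i : Fin k, (∃ u, c u = i) ∧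
        ∀ u, (u = v ∨ (cycleGraph n).Adj v u) → c u ≠ i := by
  obtain ⟨m, rfl⟩ : ∃ m, n = m + 2 := ⟨n - 2, by omega⟩
  set N := m + 2 with hN
  haveI : NeZero N := ⟨by omega⟩
  intro k c hp
  by_contra hcon
  push_neg at hcon
  -- hcon : ∀ v i, (∃ u, c u = i) → ∃ u, (u = v ∨ Adj v u) ∧ c u = i
  -- neighbours of v are v - 1 and v + 1
  have hnbr : ∀ v u : Fin N, (cycleGraph N).Adj v u → u = v - 1 ∨ u = v + 1 := by
    intro v u hadj
    rw [cycleGraph_adj] at hadj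
    rcases hadj with h1 | h1
    · left
      rw [sub_eq_iff_eq_add] at h1
      have : u + 1 = v := by rw [h1]; ring
      exact eq_sub_of_add_eq this
    · right
      rw [sub_eq_iff_eq_add] at h1
      rw [h1, add_comm]
  have hadj1 : ∀ v : Fin N, (cycleGraph N).Adj v (v + 1) := by
    intro v
    rw [cycleGraph_adj]
    right
    ring
  -- step 1: no vertex v has c (v+2) = c v
  have h2 : ∀ v : Fin N, c (v + 2) ≠ c v := by
    intro v hv
    -- every used colour is c v or c (v+1)
    have hall : ∀ u : Fin N, c u = c v ∨ c u = c (v + 1) := by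
      intro u
      obtain ⟨w, hw, hcw⟩ := hcon (v + 1) (c u) ⟨u, rfl⟩
      have hw3 : w = v ∨ w = v + 1 ∨ w = v + 2 := by
        rcases hw with rfl | hadj
        · right; left; rfl
        · rcases hnbr _ _ hadj with rfl | rfl
          · left; ring
          · right; right; ring
      rcases hw3 with rfl | rfl | rfl
      · left; exact hcw.symm
      · right; exact hcw.symm
      · left; rw [← hcw, hv]
    have hab : c v ≠ c (v + 1) := fun he => hp v (v + 1) (hadj1 v) he
    have key : ∀ j : ℕ, c (v + (j : Fin N)) = if j % 2 = 0 then c v else c (v + 1) := by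
      intro j
      induction j with
      | zero => simp
      | succ j ih =>
        have hcast : ((j + 1 : ℕ) : Fin N) = (j : Fin N) + 1 := by push_cast; ring
        have hadj' : (cycleGraph N).Adj (v + (j : Fin N)) (v + ((j + 1 : ℕ) : Fin N)) := by
          rw [hcast, ← add_assoc]
          exact hadj1 _
        have hne : c (v + ((j + 1 : ℕ) : Fin N)) ≠ c (v + (j : Fin N)) :=
          fun he => hp _ _ hadj' he.symm
        by_cases hj : j % 2 = 0
        · rw [if_neg (by omega)]
          rw [ih, if_pos hj] at hne
          rcases hall (v + ((j + 1 : ℕ) : Fin N)) with h1 | h1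
          · exact absurd h1 hne
          · exact h1
        · rw [if_pos (by omega)]
          rw [ih, if_neg hj] at hne
          rcases hall (v + ((j + 1 : ℕ) : Fin N)) with h1 | h1
          · exact h1
          · exact absurd h1 hne
    have := key N
    rw [Fin.natCast_self, add_zero, if_neg (by omega)] at this
    exact hab this
  -- step 2: c (v + 3) = c v for all v
  have h3 : ∀ v : Fin N, c (v + 3) = c v := by
    intro v
    obtain ⟨w, hw, hcw⟩ := hcon (v + 2) (c v) ⟨v, rfl⟩
    have hw3 : w = v + 1 ∨ w = v + 2 ∨ w = v + 3 := by
      rcases hw with rfl | hadj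
      · right; left; rfl
      · rcases hnbr _ _ hadj with rfl | rfl
        · left; ring
        · right; right; ring
    rcases hw3 with rfl | rfl | rfl
    · exact absurd hcw.symm (fun he => hp v (v + 1) (hadj1 v) he)
    · exact absurd hcw (h2 v)
    · exact hcw
  -- step 3: iterate
  have h3j : ∀ (v : Fin N) (j : ℕ), c (v + ((3 * j : ℕ) : Fin N)) = c v := by
    intro v j
    induction j with
    | zero => simp
    | succ j ih =>
      have hcast : ((3 * (j + 1) : ℕ) : Fin N) = ((3 * j : ℕ) : Fin N) + 3 := by
        push_cast; ring
      rw [hcast, ← add_assoc, h3, ih]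
  -- step 4: coprimality gives c (v + 1) = c v, contradiction
  have hcop : Nat.Coprime 3 N :=
    (Nat.Prime.coprime_iff_not_dvd Nat.prime_three).mpr (by omega)
  obtain ⟨j, -, hj⟩ := Nat.exists_mul_mod_eq_one_of_coprime hcop (by omega)
  have hone : ((3 * j : ℕ) : Fin N) = 1 := by
    apply Fin.ext
    rw [Fin.val_natCast, hj, Fin.val_one]
  have := h3j 0 j
  rw [hone] at this
  exact hp 0 (0 + 1) (hadj1 0) this.symm
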